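/- The group W₂₃₇ generated by the reflections in the ten roots r₁,…,r₁₀ acts transitively on the set of null vectors of Λ (future-directed primitive vectors of norm 0). -/
import Mathlib


noncomputable section

/- Entry-evaluation lemmas for 10-component vectors. -/
section VecEval
variable {α : Type*}
@[simp] lemma vec10_0 (a0 a1 a2 a3 a4 a5 a6 a7 a8 a9 : α) : (![a0,a1,a2,a3,a4,a5,a6,a7,a8,a9] : Fin 10 → α) 0 = a0 := rfl
@[simp] lemma vec10_1 (a0 a1 a2 a3 a4 a5 a6 a7 a8 a9 : α) : (![a0,a1,a2,a3,a4,a5,a6,a7,a8,a9] : Fin 10 → α) 1 = a1 := rfl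
@[simp] lemma vec10_2 (a0 a1 a2 a3 a4 a5 a6 a7 a8 a9 : α) : (![a0,a1,a2,a3,a4,a5,a6,a7,a8,a9] : Fin 10 → α) 2 = a2 := rfl
@[simp] lemma vec10_3 (a0 a1 a2 a3 a4 a5 a6 a7 a8 a9 : α) : (![a0,a1,a2,a3,a4,a5,a6,a7,a8,a9] : Fin 10 → α) 3 = a3 := rfl
@[simp] lemma vec10_4 (a0 a1 a2 a3 a4 a5 a6 a7 a8 a9 : α) : (![a0,a1,a2,a3,a4,a5,a6,a7,a8,a9] : Fin 10 → α) 4 = a4 := rfl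
@[simp] lemma vec10_5 (a0 a1 a2 a3 a4 a5 a6 a7 a8 a9 : α) : (![a0,a1,a2,a3,a4,a5,a6,a7,a8,a9] : Fin 10 → α) 5 = a5 := rfl
@[simp] lemma vec10_6 (a0 a1 a2 a3 a4 a5 a6 a7 a8 a9 : α) : (![a0,a1,a2,a3,a4,a5,a6,a7,a8,a9] : Fin 10 → α) 6 = a6 := rfl
@[simp] lemma vec10_7 (a0 a1 a2 a3 a4 a5 a6 a7 a8 a9 : α) : (![a0,a1,a2,a3,a4,a5,a6,a7,a8,a9] : Fin 10 → α) 7 = a7 := rfl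
@[simp] lemma vec10_8 (a0 a1 a2 a3 a4 a5 a6 a7 a8 a9 : α) : (![a0,a1,a2,a3,a4,a5,a6,a7,a8,a9] : Fin 10 → α) 8 = a8 := rfl
@[simp] lemma vec10_9 (a0 a1 a2 a3 a4 a5 a6 a7 a8 a9 : α) : (![a0,a1,a2,a3,a4,a5,a6,a7,a8,a9] : Fin 10 → α) 9 = a9 := rfl
end VecEval

/-- The underlying rational vector space `ℚ¹⁰`; coordinates `0,…,7` are the `E₈`-part
`x₁,…,x₈`, coordinate `8` is `y` and coordinate `9` is `z`. -/
abbrev Vec : Type := Fin 10 → ℚ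

/-- The bilinear form associated to the quadratic form
`(x₁,…,x₈;y,z)² = −x₁²−⋯−x₈²+2yz`. -/
def bil (x y : Vec) : ℚ :=
  x 8 * y 9 + x 9 * y 8 -
    (x 0 * y 0 + x 1 * y 1 + x 2 * y 2 + x 3 * y 3 +
     x 4 * y 4 + x 5 * y 5 + x 6 * y 6 + x 7 * y 7)

lemma bil_add_left (x y z : Vec) : bil (x + y) z = bil x z + bil y z := by
  simp only [bil, Pi.add_apply]; ring

lemma bil_smul_left (c : ℚ) (x z : Vec) : bil (c • x) z = c * bil x z := by
  simp only [bil, Pi.smul_apply, smul_eq_mul]; ring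

lemma bil_comm (x y : Vec) : bil x y = bil y x := by
  simp only [bil]; ring

lemma bil_add_right (x y z : Vec) : bil x (y + z) = bil x y + bil x z := by
  simp only [bil, Pi.add_apply]; ring

lemma bil_smul_right (c : ℚ) (x z : Vec) : bil x (c • z) = c * bil x z := by
  simp only [bil, Pi.smul_apply, smul_eq_mul]; ring

/-- Reflection in a vector `r` of norm `−2`, as a linear map:  `x ↦ x + (x·r)r`. -/
def reflMap (r : Vec) : Vec →ₗ[ℚ] Vec where
  toFun x := x + bil x r • r
  map_add' x y := by
    show (x + y) + bil (x + y) r • r = (x + bil x r • r) + (y + bil y r • r)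
    rw [bil_add_left, add_smul]; abel
  map_smul' c x := by
    show (c • x) + bil (c • x) r • r = (RingHom.id ℚ) c • (x + bil x r • r)
    rw [bil_smul_left]; simp [smul_add, smul_smul]

lemma reflMap_invol (r : Vec) (hr : bil r r = -2) : Function.Involutive (reflMap r) := by
  intro x
  show (x + bil x r • r) + bil (x + bil x r • r) r • r = x
  rw [bil_add_left, bil_smul_left, hr]
  have h : bil x r + bil x r * (-2) = -(bil x r) := by ring
  rw [h, neg_smul]
  abel

/-- Reflection in a root `r` (a vector of norm `−2`), as a linear automorphism of `ℚ¹⁰`: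
`x ↦ x + (x·r)r`. -/
def reflG (r : Vec) (hr : bil r r = -2) : Vec ≃ₗ[ℚ] Vec :=
  { reflMap r with
    invFun := reflMap r
    left_inv := reflMap_invol r hr
    right_inv := reflMap_invol r hr }

/-- integrality of the first eight coordinates -/
def lowInt (x : Vec) : Prop := ∀ i : Fin 10, i.val < 8 → ∃ n : ℤ, x i = n

/-- the first eight coordinates all lie in `ℤ + ½` -/
def lowHalf (x : Vec) : Prop := ∀ i : Fin 10, i.val < 8 → ∃ n : ℤ, x i = n + 1/2

/-- the sum `x₁ + ⋯ + x₈` of the first eight coordinates -/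
def sum8 (x : Vec) : ℚ := x 0 + x 1 + x 2 + x 3 + x 4 + x 5 + x 6 + x 7

/-- Membership in the Enriques lattice `Λ` (the "odd" coordinate system):
`y, z ∈ ℤ`, and `x₁,…,x₈` are either all integers with even sum,
or all in `ℤ + ½` with odd sum. -/
def mem (x : Vec) : Prop :=
  (∃ n : ℤ, x 8 = n) ∧ (∃ n : ℤ, x 9 = n) ∧
    ((lowInt x ∧ ∃ k : ℤ, sum8 x = 2 * k) ∨
     (lowHalf x ∧ ∃ k : ℤ, sum8 x = 2 * k + 1))

/-- `g` is an isometry of the lattice `Λ`: a linear automorphism of the ambient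
space which maps `Λ` bijectively onto itself and preserves the bilinear form.
(The group `O(Λ)` is the group of all such `g`.) -/
def IsIsometry (g : Vec ≃ₗ[ℚ] Vec) : Prop :=
  (∀ x : Vec, mem x ↔ mem (g x)) ∧ ∀ x y : Vec, bil (g x) (g y) = bil x y

/-- the vector `(0,…,0;1,1)`, a positive-norm vector singling out the future cone -/
def eU : Vec := ![0,0,0,0,0,0,0,0,1,1]

/-- `v` lies in the future cone: it has positive norm and lies in the same
component of `{v : v·v > 0}` as `(0,…,0;1,1)`. -/
def InFuture (v : Vec) : Prop := 0 < bil v v ∧ 0 < bil v eU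

/-- `g` preserves the future cone; `O↑(Λ)` is the set of isometries with this property. -/
def PreservesFuture (g : Vec ≃ₗ[ℚ] Vec) : Prop := ∀ v : Vec, InFuture v → InFuture (g v)

/-- A null vector: a primitive lattice vector of norm `0` which is
future-directed, i.e. pairs positively with `(0,…,0;1,1)`. -/
def IsNull (v : Vec) : Prop :=
  mem v ∧ bil v v = 0 ∧ 0 < bil v eU ∧
    ∀ (k : ℤ) (w : Vec), mem w → v = (k : ℚ) • w → k = 1 ∨ k = -1

/-- the null vector `ρ = (0,…,0;1,0)` -/
def ρ : Vec := ![0,0,0,0,0,0,0,0,1,0]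

def r1 : Vec := ![0,0,0,0,0,0,0,0,-1,1]
def r2 : Vec := ![-1/2,-1/2,-1/2,-1/2,-1/2,-1/2,-1/2,1/2,1,0]
def r3 : Vec := ![0,0,0,0,0,0,1,-1,0,0]
def r4 : Vec := ![0,0,0,0,0,1,-1,0,0,0]
def r5 : Vec := ![0,0,0,0,1,-1,0,0,0,0]
def r6 : Vec := ![0,0,0,1,-1,0,0,0,0,0]
def r7 : Vec := ![0,0,1,-1,0,0,0,0,0,0]
def r8 : Vec := ![0,1,-1,0,0,0,0,0,0,0]
def r9 : Vec := ![1,-1,0,0,0,0,0,0,0,0]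
def r10 : Vec := ![-1/2,-1/2,-1/2,1/2,1/2,1/2,1/2,1/2,0,0]

lemma r1_norm : bil r1 r1 = -2 := by norm_num [bil, r1]
lemma r2_norm : bil r2 r2 = -2 := by norm_num [bil, r2]
lemma r3_norm : bil r3 r3 = -2 := by norm_num [bil, r3]
lemma r4_norm : bil r4 r4 = -2 := by norm_num [bil, r4]
lemma r5_norm : bil r5 r5 = -2 := by norm_num [bil, r5]
lemma r6_norm : bil r6 r6 = -2 := by norm_num [bil, r6]
lemma r7_norm : bil r7 r7 = -2 := by norm_num [bil, r7]
lemma r8_norm : bil r8 r8 = -2 := by norm_num [bil, r8]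
lemma r9_norm : bil r9 r9 = -2 := by norm_num [bil, r9]
lemma r10_norm : bil r10 r10 = -2 := by norm_num [bil, r10]

def r11 : Vec := ![-1/2,-1/2,-1/2,-1/2,-1/2,-1/2,-1/2,1/2,0,2]

lemma r11_norm : bil r11 r11 = -2 := by norm_num [bil, r11]
section VecMk
variable {α : Type*}
@[simp] lemma vecmk_0 (a0 a1 a2 a3 a4 a5 a6 a7 a8 a9 : α) (h : 0 < 10) : (![a0,a1,a2,a3,a4,a5,a6,a7,a8,a9] : Fin 10 → α) ⟨0, h⟩ = a0 := rfl
@[simp] lemma vecmk_1 (a0 a1 a2 a3 a4 a5 a6 a7 a8 a9 : α) (h : 1 < 10) : (![a0,a1,a2,a3,a4,a5,a6,a7,a8,a9] : Fin 10 → α) ⟨1, h⟩ = a1 := rfl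
@[simp] lemma vecmk_2 (a0 a1 a2 a3 a4 a5 a6 a7 a8 a9 : α) (h : 2 < 10) : (![a0,a1,a2,a3,a4,a5,a6,a7,a8,a9] : Fin 10 → α) ⟨2, h⟩ = a2 := rfl
@[simp] lemma vecmk_3 (a0 a1 a2 a3 a4 a5 a6 a7 a8 a9 : α) (h : 3 < 10) : (![a0,a1,a2,a3,a4,a5,a6,a7,a8,a9] : Fin 10 → α) ⟨3, h⟩ = a3 := rfl
@[simp] lemma vecmk_4 (a0 a1 a2 a3 a4 a5 a6 a7 a8 a9 : α) (h : 4 < 10) : (![a0,a1,a2,a3,a4,a5,a6,a7,a8,a9] : Fin 10 → α) ⟨4, h⟩ = a4 := rfl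
@[simp] lemma vecmk_5 (a0 a1 a2 a3 a4 a5 a6 a7 a8 a9 : α) (h : 5 < 10) : (![a0,a1,a2,a3,a4,a5,a6,a7,a8,a9] : Fin 10 → α) ⟨5, h⟩ = a5 := rfl
@[simp] lemma vecmk_6 (a0 a1 a2 a3 a4 a5 a6 a7 a8 a9 : α) (h : 6 < 10) : (![a0,a1,a2,a3,a4,a5,a6,a7,a8,a9] : Fin 10 → α) ⟨6, h⟩ = a6 := rfl
@[simp] lemma vecmk_7 (a0 a1 a2 a3 a4 a5 a6 a7 a8 a9 : α) (h : 7 < 10) : (![a0,a1,a2,a3,a4,a5,a6,a7,a8,a9] : Fin 10 → α) ⟨7, h⟩ = a7 := rfl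
@[simp] lemma vecmk_8 (a0 a1 a2 a3 a4 a5 a6 a7 a8 a9 : α) (h : 8 < 10) : (![a0,a1,a2,a3,a4,a5,a6,a7,a8,a9] : Fin 10 → α) ⟨8, h⟩ = a8 := rfl
@[simp] lemma vecmk_9 (a0 a1 a2 a3 a4 a5 a6 a7 a8 a9 : α) (h : 9 < 10) : (![a0,a1,a2,a3,a4,a5,a6,a7,a8,a9] : Fin 10 → α) ⟨9, h⟩ = a9 := rfl
end VecMk

def wv : Vec := ![-12,-11,-10,-9,-8,-7,-6,-5,31,30]

lemma mem_r1 : mem r1 := by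
  refine ⟨⟨-1, by norm_num [r1]⟩, ⟨1, by norm_num [r1]⟩, Or.inl ⟨?_, ⟨0, by norm_num [sum8, r1]⟩⟩⟩
  intro i hi
  fin_cases i <;> first | (refine ⟨0, ?_⟩; norm_num [r1]; done) | (refine ⟨1, ?_⟩; norm_num [r1]; done) | (refine ⟨-1, ?_⟩; norm_num [r1]; done)

lemma mem_r2 : mem r2 := by
  refine ⟨⟨1, by norm_num [r2]⟩, ⟨0, by norm_num [r2]⟩, Or.inr ⟨?_, ⟨-2, by norm_num [sum8, r2]⟩⟩⟩
  intro i hi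
  fin_cases i <;> first | (refine ⟨0, ?_⟩; norm_num [r2]; done) | (refine ⟨-1, ?_⟩; norm_num [r2]; done) | (exact absurd hi (by decide))

lemma mem_r3 : mem r3 := by
  refine ⟨⟨0, by norm_num [r3]⟩, ⟨0, by norm_num [r3]⟩, Or.inl ⟨?_, ⟨0, by norm_num [sum8, r3]⟩⟩⟩
  intro i hi
  fin_cases i <;> first | (refine ⟨0, ?_⟩; norm_num [r3]; done) | (refine ⟨1, ?_⟩; norm_num [r3]; done) | (refine ⟨-1, ?_⟩; norm_num [r3]; done)

lemma mem_r4 : mem r4 := by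
  refine ⟨⟨0, by norm_num [r4]⟩, ⟨0, by norm_num [r4]⟩, Or.inl ⟨?_, ⟨0, by norm_num [sum8, r4]⟩⟩⟩
  intro i hi
  fin_cases i <;> first | (refine ⟨0, ?_⟩; norm_num [r4]; done) | (refine ⟨1, ?_⟩; norm_num [r4]; done) | (refine ⟨-1, ?_⟩; norm_num [r4]; done)

lemma mem_r5 : mem r5 := by
  refine ⟨⟨0, by norm_num [r5]⟩, ⟨0, by norm_num [r5]⟩, Or.inl ⟨?_, ⟨0, by norm_num [sum8, r5]⟩⟩⟩
  intro i hi
  fin_cases i <;> first | (refine ⟨0, ?_⟩; norm_num [r5]; done) | (refine ⟨1, ?_⟩; norm_num [r5]; done) | (refine ⟨-1, ?_⟩; norm_num [r5]; done)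

lemma mem_r6 : mem r6 := by
  refine ⟨⟨0, by norm_num [r6]⟩, ⟨0, by norm_num [r6]⟩, Or.inl ⟨?_, ⟨0, by norm_num [sum8, r6]⟩⟩⟩
  intro i hi
  fin_cases i <;> first | (refine ⟨0, ?_⟩; norm_num [r6]; done) | (refine ⟨1, ?_⟩; norm_num [r6]; done) | (refine ⟨-1, ?_⟩; norm_num [r6]; done)

lemma mem_r7 : mem r7 := by
  refine ⟨⟨0, by norm_num [r7]⟩, ⟨0, by norm_num [r7]⟩, Or.inl ⟨?_, ⟨0, by norm_num [sum8, r7]⟩⟩⟩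
  intro i hi
  fin_cases i <;> first | (refine ⟨0, ?_⟩; norm_num [r7]; done) | (refine ⟨1, ?_⟩; norm_num [r7]; done) | (refine ⟨-1, ?_⟩; norm_num [r7]; done)

lemma mem_r8 : mem r8 := by
  refine ⟨⟨0, by norm_num [r8]⟩, ⟨0, by norm_num [r8]⟩, Or.inl ⟨?_, ⟨0, by norm_num [sum8, r8]⟩⟩⟩
  intro i hi
  fin_cases i <;> first | (refine ⟨0, ?_⟩; norm_num [r8]; done) | (refine ⟨1, ?_⟩; norm_num [r8]; done) | (refine ⟨-1, ?_⟩; norm_num [r8]; done)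

lemma mem_r9 : mem r9 := by
  refine ⟨⟨0, by norm_num [r9]⟩, ⟨0, by norm_num [r9]⟩, Or.inl ⟨?_, ⟨0, by norm_num [sum8, r9]⟩⟩⟩
  intro i hi
  fin_cases i <;> first | (refine ⟨0, ?_⟩; norm_num [r9]; done) | (refine ⟨1, ?_⟩; norm_num [r9]; done) | (refine ⟨-1, ?_⟩; norm_num [r9]; done)

lemma mem_r10 : mem r10 := by
  refine ⟨⟨0, by norm_num [r10]⟩, ⟨0, by norm_num [r10]⟩, Or.inr ⟨?_, ⟨0, by norm_num [sum8, r10]⟩⟩⟩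
  intro i hi
  fin_cases i <;> first | (refine ⟨0, ?_⟩; norm_num [r10]; done) | (refine ⟨-1, ?_⟩; norm_num [r10]; done) | (exact absurd hi (by decide))

lemma mem_rho : mem ρ := by
  refine ⟨⟨1, by norm_num [ρ]⟩, ⟨0, by norm_num [ρ]⟩, Or.inl ⟨?_, ⟨0, by norm_num [sum8, ρ]⟩⟩⟩
  intro i hi
  fin_cases i <;> first | (refine ⟨0, ?_⟩; norm_num [ρ]; done) | (refine ⟨1, ?_⟩; norm_num [ρ]; done)

lemma mem_wv : mem wv := by
  refine ⟨⟨31, by norm_num [wv]⟩, ⟨30, by norm_num [wv]⟩, Or.inl ⟨?_, ⟨-34, by norm_num [sum8, wv]⟩⟩⟩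
  intro i hi
  fin_cases i <;> first | (refine ⟨-12, ?_⟩; norm_num [wv]; done) | (refine ⟨-11, ?_⟩; norm_num [wv]; done) | (refine ⟨-10, ?_⟩; norm_num [wv]; done) | (refine ⟨-9, ?_⟩; norm_num [wv]; done) | (refine ⟨-8, ?_⟩; norm_num [wv]; done) | (refine ⟨-7, ?_⟩; norm_num [wv]; done) | (refine ⟨-6, ?_⟩; norm_num [wv]; done) | (refine ⟨-5, ?_⟩; norm_num [wv]; done) | (refine ⟨31, ?_⟩; norm_num [wv]; done) | (refine ⟨30, ?_⟩; norm_num [wv]; done)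

lemma dot8_int {x y : Vec} (hx : mem x) (hy : mem y) :
    ∃ n : ℤ, x 0*y 0 + x 1*y 1 + x 2*y 2 + x 3*y 3 + x 4*y 4 + x 5*y 5 + x 6*y 6 + x 7*y 7 = n := by
  obtain ⟨-, -, hxc⟩ := hx
  obtain ⟨-, -, hyc⟩ := hy
  rcases hxc with ⟨hxl, k, hk⟩ | ⟨hxl, k, hk⟩ <;> rcases hyc with ⟨hyl, l, hl⟩ | ⟨hyl, l, hl⟩ <;>
    simp only [sum8] at hk hl
  · -- int int
    obtain ⟨a0, ha0⟩ := hxl 0 (by decide)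
    obtain ⟨a1, ha1⟩ := hxl 1 (by decide)
    obtain ⟨a2, ha2⟩ := hxl 2 (by decide)
    obtain ⟨a3, ha3⟩ := hxl 3 (by decide)
    obtain ⟨a4, ha4⟩ := hxl 4 (by decide)
    obtain ⟨a5, ha5⟩ := hxl 5 (by decide)
    obtain ⟨a6, ha6⟩ := hxl 6 (by decide)
    obtain ⟨a7, ha7⟩ := hxl 7 (by decide)
    obtain ⟨b0, hb0⟩ := hyl 0 (by decide)
    obtain ⟨b1, hb1⟩ := hyl 1 (by decide)
    obtain ⟨b2, hb2⟩ := hyl 2 (by decide)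
    obtain ⟨b3, hb3⟩ := hyl 3 (by decide)
    obtain ⟨b4, hb4⟩ := hyl 4 (by decide)
    obtain ⟨b5, hb5⟩ := hyl 5 (by decide)
    obtain ⟨b6, hb6⟩ := hyl 6 (by decide)
    obtain ⟨b7, hb7⟩ := hyl 7 (by decide)
    refine ⟨a0*b0 + a1*b1 + a2*b2 + a3*b3 + a4*b4 + a5*b5 + a6*b6 + a7*b7, ?_⟩
    rw [ha0, ha1, ha2, ha3, ha4, ha5, ha6, ha7, hb0, hb1, hb2, hb3, hb4, hb5, hb6, hb7]
    push_cast
    ring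
  · -- int half
    obtain ⟨a0, ha0⟩ := hxl 0 (by decide)
    obtain ⟨a1, ha1⟩ := hxl 1 (by decide)
    obtain ⟨a2, ha2⟩ := hxl 2 (by decide)
    obtain ⟨a3, ha3⟩ := hxl 3 (by decide)
    obtain ⟨a4, ha4⟩ := hxl 4 (by decide)
    obtain ⟨a5, ha5⟩ := hxl 5 (by decide)
    obtain ⟨a6, ha6⟩ := hxl 6 (by decide)
    obtain ⟨a7, ha7⟩ := hxl 7 (by decide)
    obtain ⟨b0, hb0⟩ := hyl 0 (by decide)
    obtain ⟨b1, hb1⟩ := hyl 1 (by decide)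
    obtain ⟨b2, hb2⟩ := hyl 2 (by decide)
    obtain ⟨b3, hb3⟩ := hyl 3 (by decide)
    obtain ⟨b4, hb4⟩ := hyl 4 (by decide)
    obtain ⟨b5, hb5⟩ := hyl 5 (by decide)
    obtain ⟨b6, hb6⟩ := hyl 6 (by decide)
    obtain ⟨b7, hb7⟩ := hyl 7 (by decide)
    rw [ha0, ha1, ha2, ha3, ha4, ha5, ha6, ha7] at hk
    refine ⟨a0*b0 + a1*b1 + a2*b2 + a3*b3 + a4*b4 + a5*b5 + a6*b6 + a7*b7 + k, ?_⟩
    rw [ha0, ha1, ha2, ha3, ha4, ha5, ha6, ha7, hb0, hb1, hb2, hb3, hb4, hb5, hb6, hb7]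
    push_cast
    push_cast at hk
    linear_combination (1/2) * hk
  · -- half int
    obtain ⟨a0, ha0⟩ := hxl 0 (by decide)
    obtain ⟨a1, ha1⟩ := hxl 1 (by decide)
    obtain ⟨a2, ha2⟩ := hxl 2 (by decide)
    obtain ⟨a3, ha3⟩ := hxl 3 (by decide)
    obtain ⟨a4, ha4⟩ := hxl 4 (by decide)
    obtain ⟨a5, ha5⟩ := hxl 5 (by decide)
    obtain ⟨a6, ha6⟩ := hxl 6 (by decide)
    obtain ⟨a7, ha7⟩ := hxl 7 (by decide)
    obtain ⟨b0, hb0⟩ := hyl 0 (by decide)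
    obtain ⟨b1, hb1⟩ := hyl 1 (by decide)
    obtain ⟨b2, hb2⟩ := hyl 2 (by decide)
    obtain ⟨b3, hb3⟩ := hyl 3 (by decide)
    obtain ⟨b4, hb4⟩ := hyl 4 (by decide)
    obtain ⟨b5, hb5⟩ := hyl 5 (by decide)
    obtain ⟨b6, hb6⟩ := hyl 6 (by decide)
    obtain ⟨b7, hb7⟩ := hyl 7 (by decide)
    rw [hb0, hb1, hb2, hb3, hb4, hb5, hb6, hb7] at hl
    refine ⟨a0*b0 + a1*b1 + a2*b2 + a3*b3 + a4*b4 + a5*b5 + a6*b6 + a7*b7 + l, ?_⟩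
    rw [ha0, ha1, ha2, ha3, ha4, ha5, ha6, ha7, hb0, hb1, hb2, hb3, hb4, hb5, hb6, hb7]
    push_cast
    push_cast at hl
    linear_combination (1/2) * hl
  · -- half half
    obtain ⟨a0, ha0⟩ := hxl 0 (by decide)
    obtain ⟨a1, ha1⟩ := hxl 1 (by decide)
    obtain ⟨a2, ha2⟩ := hxl 2 (by decide)
    obtain ⟨a3, ha3⟩ := hxl 3 (by decide)
    obtain ⟨a4, ha4⟩ := hxl 4 (by decide)
    obtain ⟨a5, ha5⟩ := hxl 5 (by decide)
    obtain ⟨a6, ha6⟩ := hxl 6 (by decide)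
    obtain ⟨a7, ha7⟩ := hxl 7 (by decide)
    obtain ⟨b0, hb0⟩ := hyl 0 (by decide)
    obtain ⟨b1, hb1⟩ := hyl 1 (by decide)
    obtain ⟨b2, hb2⟩ := hyl 2 (by decide)
    obtain ⟨b3, hb3⟩ := hyl 3 (by decide)
    obtain ⟨b4, hb4⟩ := hyl 4 (by decide)
    obtain ⟨b5, hb5⟩ := hyl 5 (by decide)
    obtain ⟨b6, hb6⟩ := hyl 6 (by decide)
    obtain ⟨b7, hb7⟩ := hyl 7 (by decide)
    rw [ha0, ha1, ha2, ha3, ha4, ha5, ha6, ha7] at hk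
    rw [hb0, hb1, hb2, hb3, hb4, hb5, hb6, hb7] at hl
    refine ⟨a0*b0 + a1*b1 + a2*b2 + a3*b3 + a4*b4 + a5*b5 + a6*b6 + a7*b7 + k + l - 1, ?_⟩
    rw [ha0, ha1, ha2, ha3, ha4, ha5, ha6, ha7, hb0, hb1, hb2, hb3, hb4, hb5, hb6, hb7]
    push_cast
    push_cast at hk hl
    linear_combination (1/2) * hk + (1/2) * hl

lemma bil_int {x y : Vec} (hx : mem x) (hy : mem y) : ∃ n : ℤ, bil x y = n := by
  obtain ⟨m, hm⟩ := dot8_int hx hy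
  obtain ⟨⟨x8, hx8⟩, ⟨x9, hx9⟩, -⟩ := hx
  obtain ⟨⟨y8, hy8⟩, ⟨y9, hy9⟩, -⟩ := hy
  refine ⟨x8 * y9 + x9 * y8 - m, ?_⟩
  have hb : bil x y = x 8 * y 9 + x 9 * y 8 -
      (x 0*y 0 + x 1*y 1 + x 2*y 2 + x 3*y 3 + x 4*y 4 + x 5*y 5 + x 6*y 6 + x 7*y 7) := rfl
  rw [hb, hm, hx8, hx9, hy8, hy9]
  push_cast
  ring

lemma sum8_add (x y : Vec) : sum8 (x + y) = sum8 x + sum8 y := by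
  simp only [sum8, Pi.add_apply]; ring

lemma sum8_smul (c : ℚ) (x : Vec) : sum8 (c • x) = c * sum8 x := by
  simp only [sum8, Pi.smul_apply, smul_eq_mul]; ring

lemma mem_add {x y : Vec} (hx : mem x) (hy : mem y) : mem (x + y) := by
  obtain ⟨⟨x8, hx8⟩, ⟨x9, hx9⟩, hxc⟩ := hx
  obtain ⟨⟨y8, hy8⟩, ⟨y9, hy9⟩, hyc⟩ := hy
  refine ⟨⟨x8 + y8, by rw [Pi.add_apply, hx8, hy8]; push_cast; ring⟩,
    ⟨x9 + y9, by rw [Pi.add_apply, hx9, hy9]; push_cast; ring⟩, ?_⟩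
  rcases hxc with ⟨hxl, k, hk⟩ | ⟨hxl, k, hk⟩ <;> rcases hyc with ⟨hyl, l, hl⟩ | ⟨hyl, l, hl⟩
  · refine Or.inl ⟨fun i hi => ?_, ⟨k + l, by rw [sum8_add, hk, hl]; push_cast; ring⟩⟩
    obtain ⟨a, ha⟩ := hxl i hi
    obtain ⟨b, hb⟩ := hyl i hi
    exact ⟨a + b, by rw [Pi.add_apply, ha, hb]; push_cast; ring⟩
  · refine Or.inr ⟨fun i hi => ?_, ⟨k + l, by rw [sum8_add, hk, hl]; push_cast; ring⟩⟩
    obtain ⟨a, ha⟩ := hxl i hi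
    obtain ⟨b, hb⟩ := hyl i hi
    exact ⟨a + b, by rw [Pi.add_apply, ha, hb]; push_cast; ring⟩
  · refine Or.inr ⟨fun i hi => ?_, ⟨k + l, by rw [sum8_add, hk, hl]; push_cast; ring⟩⟩
    obtain ⟨a, ha⟩ := hxl i hi
    obtain ⟨b, hb⟩ := hyl i hi
    exact ⟨a + b, by rw [Pi.add_apply, ha, hb]; push_cast; ring⟩
  · refine Or.inl ⟨fun i hi => ?_, ⟨k + l + 1, by rw [sum8_add, hk, hl]; push_cast; ring⟩⟩
    obtain ⟨a, ha⟩ := hxl i hi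
    obtain ⟨b, hb⟩ := hyl i hi
    exact ⟨a + b + 1, by rw [Pi.add_apply, ha, hb]; push_cast; ring⟩

lemma mem_zsmul (n : ℤ) {x : Vec} (hx : mem x) : mem ((n : ℚ) • x) := by
  obtain ⟨⟨x8, hx8⟩, ⟨x9, hx9⟩, hxc⟩ := hx
  refine ⟨⟨n * x8, by rw [Pi.smul_apply, smul_eq_mul, hx8]; push_cast; ring⟩,
    ⟨n * x9, by rw [Pi.smul_apply, smul_eq_mul, hx9]; push_cast; ring⟩, ?_⟩
  rcases hxc with ⟨hxl, k, hk⟩ | ⟨hxl, k, hk⟩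
  · refine Or.inl ⟨fun i hi => ?_, ⟨n * k, by rw [sum8_smul, hk]; push_cast; ring⟩⟩
    obtain ⟨a, ha⟩ := hxl i hi
    exact ⟨n * a, by rw [Pi.smul_apply, smul_eq_mul, ha]; push_cast; ring⟩
  · rcases Int.even_or_odd n with ⟨t, ht⟩ | ⟨t, ht⟩
    · refine Or.inl ⟨fun i hi => ?_, ⟨t * (2 * k + 1), by rw [sum8_smul, hk]; push_cast [ht]; ring⟩⟩
      obtain ⟨a, ha⟩ := hxl i hi
      exact ⟨n * a + t, by rw [Pi.smul_apply, smul_eq_mul, ha]; push_cast [ht]; ring⟩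
    · refine Or.inr ⟨fun i hi => ?_, ⟨2 * t * k + k + t, by rw [sum8_smul, hk]; push_cast [ht]; ring⟩⟩
      obtain ⟨a, ha⟩ := hxl i hi
      exact ⟨n * a + t, by rw [Pi.smul_apply, smul_eq_mul, ha]; push_cast [ht]; ring⟩

lemma cauchy8 (a0 a1 a2 a3 a4 a5 a6 a7 b0 b1 b2 b3 b4 b5 b6 b7 : ℚ) :
    (a0*b0 + a1*b1 + a2*b2 + a3*b3 + a4*b4 + a5*b5 + a6*b6 + a7*b7)^2 ≤ (a0^2 + a1^2 + a2^2 + a3^2 + a4^2 + a5^2 + a6^2 + a7^2) * (b0^2 + b1^2 + b2^2 + b3^2 + b4^2 + b5^2 + b6^2 + b7^2) := by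
  have key : (a0^2 + a1^2 + a2^2 + a3^2 + a4^2 + a5^2 + a6^2 + a7^2) * (b0^2 + b1^2 + b2^2 + b3^2 + b4^2 + b5^2 + b6^2 + b7^2) - (a0*b0 + a1*b1 + a2*b2 + a3*b3 + a4*b4 + a5*b5 + a6*b6 + a7*b7)^2 = 
      (a0*b1 - a1*b0)^2 + (a0*b2 - a2*b0)^2 + (a0*b3 - a3*b0)^2 + (a0*b4 - a4*b0)^2 + (a0*b5 - a5*b0)^2 + (a0*b6 - a6*b0)^2 + (a0*b7 - a7*b0)^2 + (a1*b2 - a2*b1)^2 + (a1*b3 - a3*b1)^2 + (a1*b4 - a4*b1)^2 + (a1*b5 - a5*b1)^2 + (a1*b6 - a6*b1)^2 + (a1*b7 - a7*b1)^2 + (a2*b3 - a3*b2)^2 + (a2*b4 - a4*b2)^2 + (a2*b5 - a5*b2)^2 + (a2*b6 - a6*b2)^2 + (a2*b7 - a7*b2)^2 + (a3*b4 - a4*b3)^2 + (a3*b5 - a5*b3)^2 + (a3*b6 - a6*b3)^2 + (a3*b7 - a7*b3)^2 + (a4*b5 - a5*b4)^2 + (a4*b6 - a6*b4)^2 + (a4*b7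 - a7*b4)^2 + (a5*b6 - a6*b5)^2 + (a5*b7 - a7*b5)^2 + (a6*b7 - a7*b6)^2 := by ring
  have hpos : (0:ℚ) ≤ (a0*b1 - a1*b0)^2 + (a0*b2 - a2*b0)^2 + (a0*b3 - a3*b0)^2 + (a0*b4 - a4*b0)^2 + (a0*b5 - a5*b0)^2 + (a0*b6 - a6*b0)^2 + (a0*b7 - a7*b0)^2 + (a1*b2 - a2*b1)^2 + (a1*b3 - a3*b1)^2 + (a1*b4 - a4*b1)^2 + (a1*b5 - a5*b1)^2 + (a1*b6 - a6*b1)^2 + (a1*b7 - a7*b1)^2 + (a2*b3 - a3*b2)^2 + (a2*b4 - a4*b2)^2 + (a2*b5 - a5*b2)^2 + (a2*b6 - a6*b2)^2 + (a2*b7 - a7*b2)^2 + (a3*b4 - a4*b3)^2 + (a3*b5 - a5*b3)^2 + (a3*b6 - a6*b3)^2 + (a3*b7 - a7*b3)^2 + (a4*b5 - a5*b4)^2 + (a4*b6 - a6*b4)^2 + (a4*b7 - a7*b4)^2 + (a5*b6 - a6*b5)^2 + (a5*b7 - a7*b5)^2 + (a6*b7 - a7*b6)^2 := by positivity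
  linarith

set_option maxHeartbeats 800000 in
lemma null_coords_nonneg {u : Vec} (h1 : bil u u = 0) (h3 : 0 < bil u eU) :
    0 ≤ u 8 ∧ 0 ≤ u 9 := by
  have hq : 0 ≤ u 0^2 + u 1^2 + u 2^2 + u 3^2 + u 4^2 + u 5^2 + u 6^2 + u 7^2 := by positivity
  simp only [bil, eU, vec10_0, vec10_1, vec10_2, vec10_3, vec10_4, vec10_5, vec10_6,
    vec10_7, vec10_8, vec10_9] at h1 h3
  have hprod : 0 ≤ u 8 * u 9 := by linarith
  constructor
  · rcases le_or_gt 0 (u 8) with h | h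
    · exact h
    · rcases le_or_gt 0 (u 9) with h' | h'
      · have := mul_neg_of_neg_of_pos h (by linarith : (0:ℚ) < u 9); linarith
      · linarith
  · rcases le_or_gt 0 (u 9) with h | h
    · exact h
    · rcases le_or_gt 0 (u 8) with h' | h'
      · have := mul_neg_of_pos_of_neg (by linarith : (0:ℚ) < u 8) h
        rcases eq_or_lt_of_le h' with h'' | h''
        · linarith [h1, hq, h'' ▸ hprod]
        · linarith
      · linarith

set_option maxHeartbeats 800000 in
lemma cone {u u' : Vec} (h1 : bil u u = 0) (h2 : bil u' u' = 0) (h3 : 0 < bil u eU)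
    (h4 : 0 < bil u u') : 0 < bil u' eU := by
  obtain ⟨hy, hz⟩ := null_coords_nonneg h1 h3
  by_contra hcon
  push_neg at hcon
  have hq' : 0 ≤ u' 0^2 + u' 1^2 + u' 2^2 + u' 3^2 + u' 4^2 + u' 5^2 + u' 6^2 + u' 7^2 := by
    positivity
  simp only [bil, eU, vec10_0, vec10_1, vec10_2, vec10_3, vec10_4, vec10_5, vec10_6,
    vec10_7, vec10_8, vec10_9] at h1 h2 h4 hcon
  have hprod' : 0 ≤ u' 8 * u' 9 := by linarith
  have hy' : u' 8 ≤ 0 := by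
    rcases le_or_gt (u' 8) 0 with h | h
    · exact h
    · rcases le_or_gt 0 (u' 9) with h' | h'
      · linarith
      · have := mul_neg_of_pos_of_neg h h'; linarith
  have hz' : u' 9 ≤ 0 := by
    rcases le_or_gt (u' 9) 0 with h | h
    · exact h
    · rcases le_or_gt 0 (u' 8) with h' | h'
      · linarith
      · have := mul_neg_of_neg_of_pos h' h; linarith
  have hCS := cauchy8 (u 0) (u 1) (u 2) (u 3) (u 4) (u 5) (u 6) (u 7)
    (u' 0) (u' 1) (u' 2) (u' 3) (u' 4) (u' 5) (u' 6) (u' 7)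
  have e1 : u 0^2 + u 1^2 + u 2^2 + u 3^2 + u 4^2 + u 5^2 + u 6^2 + u 7^2
      = 2*(u 8 * u 9) := by linarith
  have e2 : u' 0^2 + u' 1^2 + u' 2^2 + u' 3^2 + u' 4^2 + u' 5^2 + u' 6^2 + u' 7^2
      = 2*(u' 8 * u' 9) := by linarith
  rw [e1, e2] at hCS
  set P := u 0*u' 0 + u 1*u' 1 + u 2*u' 2 + u 3*u' 3 + u 4*u' 4 + u 5*u' 5 + u 6*u' 6 + u 7*u' 7
    with hPdef
  have hs : u 8 * u' 9 + u 9 * u' 8 ≤ 0 := by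
    have t1 := mul_nonpos_of_nonneg_of_nonpos hy hz'
    have t2 := mul_nonpos_of_nonneg_of_nonpos hz hy'
    linarith
  have hP : P < u 8 * u' 9 + u 9 * u' 8 := by linarith
  have hP2 : (u 8 * u' 9 + u 9 * u' 8)^2 < P^2 := by
    have h0 : (0:ℚ) ≤ -(u 8 * u' 9 + u 9 * u' 8) := by linarith
    have := mul_self_lt_mul_self h0 (by linarith : -(u 8 * u' 9 + u 9 * u' 8) < -P)
    nlinarith [this]
  nlinarith [hP2, hCS, sq_nonneg (u 8 * u' 9 - u 9 * u' 8)]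

set_option maxHeartbeats 800000 in
lemma wpos {v : Vec} (h1 : bil v v = 0) (h3 : 0 < bil v eU) : 0 < bil v wv := by
  obtain ⟨hy, hz⟩ := null_coords_nonneg h1 h3
  have hCS := cauchy8 (v 0) (v 1) (v 2) (v 3) (v 4) (v 5) (v 6) (v 7)
    12 11 10 9 8 7 6 5
  simp only [bil, eU, wv, vec10_0, vec10_1, vec10_2, vec10_3, vec10_4, vec10_5, vec10_6,
    vec10_7, vec10_8, vec10_9] at h1 h3 ⊢
  have e1 : v 0^2 + v 1^2 + v 2^2 + v 3^2 + v 4^2 + v 5^2 + v 6^2 + v 7^2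
      = 2*(v 8 * v 9) := by linarith
  rw [e1] at hCS
  set S := v 0*12 + v 1*11 + v 2*10 + v 3*9 + v 4*8 + v 5*7 + v 6*6 + v 7*5 with hSdef
  have hyz : (0:ℚ) < 30 * v 8 + 31 * v 9 := by linarith
  by_contra hc
  push_neg at hc
  have hS : S ≤ -(30 * v 8 + 31 * v 9) := by linarith
  have hS2 : (30 * v 8 + 31 * v 9)^2 ≤ S^2 := by
    have := mul_self_le_mul_self (le_of_lt hyz) (by linarith : 30 * v 8 + 31 * v 9 ≤ -S)
    nlinarith [this]
  nlinarith [hS2, hCS, mul_nonneg hy hz, sq_nonneg (v 8), sq_nonneg (v 9), mul_pos hyz hyz]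
lemma gram_id (v : Vec) : bil v v =
    2 * (bil v r2 * bil v r2) +
    6 * (bil v r3 * bil v r3) +
    12 * (bil v r4 * bil v r4) +
    20 * (bil v r5 * bil v r5) +
    30 * (bil v r6 * bil v r6) +
    42 * (bil v r7 * bil v r7) +
    18 * (bil v r8 * bil v r8) +
    4 * (bil v r9 * bil v r9) +
    10 * (bil v r10 * bil v r10) +
    2 * (bil v r1 * bil v r2) +
    4 * (bil v r1 * bil v r3) +
    6 * (bil v r1 * bil v r4) +
    8 * (bil v r1 * bil v r5) +
    10 * (bil v r1 * bil v r6) +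
    12 * (bil v r1 * bil v r7) +
    8 * (bil v r1 * bil v r8) +
    4 * (bil v r1 * bil v r9) +
    6 * (bil v r1 * bil v r10) +
    8 * (bil v r2 * bil v r3) +
    12 * (bil v r2 * bil v r4) +
    16 * (bil v r2 * bil v r5) +
    20 * (bil v r2 * bil v r6) +
    24 * (bil v r2 * bil v r7) +
    16 * (bil v r2 * bil v r8) +
    8 * (bil v r2 * bil v r9) +
    12 * (bil v r2 * bil v r10) +
    18 * (bil v r3 * bil v r4) +
    24 * (bil v r3 * bil v r5) +
    30 * (bil v r3 * bil v r6) +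
    36 * (bil v r3 * bil v r7) +
    24 * (bil v r3 * bil v r8) +
    12 * (bil v r3 * bil v r9) +
    18 * (bil v r3 * bil v r10) +
    32 * (bil v r4 * bil v r5) +
    40 * (bil v r4 * bil v r6) +
    48 * (bil v r4 * bil v r7) +
    32 * (bil v r4 * bil v r8) +
    16 * (bil v r4 * bil v r9) +
    24 * (bil v r4 * bil v r10) +
    50 * (bil v r5 * bil v r6) +
    60 * (bil v r5 * bil v r7) +
    40 * (bil v r5 * bil v r8) +
    20 * (bil v r5 * bil v r9) +
    30 * (bil v r5 * bil v r10) +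
    72 * (bil v r6 * bil v r7) +
    48 * (bil v r6 * bil v r8) +
    24 * (bil v r6 * bil v r9) +
    36 * (bil v r6 * bil v r10) +
    56 * (bil v r7 * bil v r8) +
    28 * (bil v r7 * bil v r9) +
    42 * (bil v r7 * bil v r10) +
    18 * (bil v r8 * bil v r9) +
    28 * (bil v r8 * bil v r10) +
    14 * (bil v r9 * bil v r10) := by
  simp only [bil, r1, r2, r3, r4, r5, r6, r7, r8, r9, r10,
    vec10_0, vec10_1, vec10_2, vec10_3, vec10_4, vec10_5, vec10_6, vec10_7, vec10_8, vec10_9]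
  ring

set_option maxRecDepth 8000 in
lemma gram_zero (v : Vec) (hn : bil v v = 0)
    (g1 : 0 ≤ bil v r1) (g2 : 0 ≤ bil v r2) (g3 : 0 ≤ bil v r3) (g4 : 0 ≤ bil v r4) (g5 : 0 ≤ bil v r5) (g6 : 0 ≤ bil v r6) (g7 : 0 ≤ bil v r7) (g8 : 0 ≤ bil v r8) (g9 : 0 ≤ bil v r9) (g10 : 0 ≤ bil v r10) :
    bil v r2 = 0 ∧ bil v r3 = 0 ∧ bil v r4 = 0 ∧ bil v r5 = 0 ∧ bil v r6 = 0 ∧ bil v r7 = 0 ∧ bil v r8 = 0 ∧ bil v r9 = 0 ∧ bil v r10 = 0 := by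
  have hg := gram_id v
  rw [hn] at hg
  have p1_1 : 0 ≤ bil v r1 * bil v r1 := mul_nonneg g1 g1
  have p1_2 : 0 ≤ bil v r1 * bil v r2 := mul_nonneg g1 g2
  have p1_3 : 0 ≤ bil v r1 * bil v r3 := mul_nonneg g1 g3
  have p1_4 : 0 ≤ bil v r1 * bil v r4 := mul_nonneg g1 g4
  have p1_5 : 0 ≤ bil v r1 * bil v r5 := mul_nonneg g1 g5
  have p1_6 : 0 ≤ bil v r1 * bil v r6 := mul_nonneg g1 g6
  have p1_7 : 0 ≤ bil v r1 * bil v r7 := mul_nonneg g1 g7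
  have p1_8 : 0 ≤ bil v r1 * bil v r8 := mul_nonneg g1 g8
  have p1_9 : 0 ≤ bil v r1 * bil v r9 := mul_nonneg g1 g9
  have p1_10 : 0 ≤ bil v r1 * bil v r10 := mul_nonneg g1 g10
  have p2_2 : 0 ≤ bil v r2 * bil v r2 := mul_nonneg g2 g2
  have p2_3 : 0 ≤ bil v r2 * bil v r3 := mul_nonneg g2 g3
  have p2_4 : 0 ≤ bil v r2 * bil v r4 := mul_nonneg g2 g4
  have p2_5 : 0 ≤ bil v r2 * bil v r5 := mul_nonneg g2 g5
  have p2_6 : 0 ≤ bil v r2 * bil v r6 := mul_nonneg g2 g6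
  have p2_7 : 0 ≤ bil v r2 * bil v r7 := mul_nonneg g2 g7
  have p2_8 : 0 ≤ bil v r2 * bil v r8 := mul_nonneg g2 g8
  have p2_9 : 0 ≤ bil v r2 * bil v r9 := mul_nonneg g2 g9
  have p2_10 : 0 ≤ bil v r2 * bil v r10 := mul_nonneg g2 g10
  have p3_3 : 0 ≤ bil v r3 * bil v r3 := mul_nonneg g3 g3
  have p3_4 : 0 ≤ bil v r3 * bil v r4 := mul_nonneg g3 g4
  have p3_5 : 0 ≤ bil v r3 * bil v r5 := mul_nonneg g3 g5
  have p3_6 : 0 ≤ bil v r3 * bil v r6 := mul_nonneg g3 g6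
  have p3_7 : 0 ≤ bil v r3 * bil v r7 := mul_nonneg g3 g7
  have p3_8 : 0 ≤ bil v r3 * bil v r8 := mul_nonneg g3 g8
  have p3_9 : 0 ≤ bil v r3 * bil v r9 := mul_nonneg g3 g9
  have p3_10 : 0 ≤ bil v r3 * bil v r10 := mul_nonneg g3 g10
  have p4_4 : 0 ≤ bil v r4 * bil v r4 := mul_nonneg g4 g4
  have p4_5 : 0 ≤ bil v r4 * bil v r5 := mul_nonneg g4 g5
  have p4_6 : 0 ≤ bil v r4 * bil v r6 := mul_nonneg g4 g6
  have p4_7 : 0 ≤ bil v r4 * bil v r7 := mul_nonneg g4 g7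
  have p4_8 : 0 ≤ bil v r4 * bil v r8 := mul_nonneg g4 g8
  have p4_9 : 0 ≤ bil v r4 * bil v r9 := mul_nonneg g4 g9
  have p4_10 : 0 ≤ bil v r4 * bil v r10 := mul_nonneg g4 g10
  have p5_5 : 0 ≤ bil v r5 * bil v r5 := mul_nonneg g5 g5
  have p5_6 : 0 ≤ bil v r5 * bil v r6 := mul_nonneg g5 g6
  have p5_7 : 0 ≤ bil v r5 * bil v r7 := mul_nonneg g5 g7
  have p5_8 : 0 ≤ bil v r5 * bil v r8 := mul_nonneg g5 g8
  have p5_9 : 0 ≤ bil v r5 * bil v r9 := mul_nonneg g5 g9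
  have p5_10 : 0 ≤ bil v r5 * bil v r10 := mul_nonneg g5 g10
  have p6_6 : 0 ≤ bil v r6 * bil v r6 := mul_nonneg g6 g6
  have p6_7 : 0 ≤ bil v r6 * bil v r7 := mul_nonneg g6 g7
  have p6_8 : 0 ≤ bil v r6 * bil v r8 := mul_nonneg g6 g8
  have p6_9 : 0 ≤ bil v r6 * bil v r9 := mul_nonneg g6 g9
  have p6_10 : 0 ≤ bil v r6 * bil v r10 := mul_nonneg g6 g10
  have p7_7 : 0 ≤ bil v r7 * bil v r7 := mul_nonneg g7 g7
  have p7_8 : 0 ≤ bil v r7 * bil v r8 := mul_nonneg g7 g8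
  have p7_9 : 0 ≤ bil v r7 * bil v r9 := mul_nonneg g7 g9
  have p7_10 : 0 ≤ bil v r7 * bil v r10 := mul_nonneg g7 g10
  have p8_8 : 0 ≤ bil v r8 * bil v r8 := mul_nonneg g8 g8
  have p8_9 : 0 ≤ bil v r8 * bil v r9 := mul_nonneg g8 g9
  have p8_10 : 0 ≤ bil v r8 * bil v r10 := mul_nonneg g8 g10
  have p9_9 : 0 ≤ bil v r9 * bil v r9 := mul_nonneg g9 g9
  have p9_10 : 0 ≤ bil v r9 * bil v r10 := mul_nonneg g9 g10
  have p10_10 : 0 ≤ bil v r10 * bil v r10 := mul_nonneg g10 g10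
  have z2 : bil v r2 * bil v r2 ≤ 0 := by linarith
  have z3 : bil v r3 * bil v r3 ≤ 0 := by linarith
  have z4 : bil v r4 * bil v r4 ≤ 0 := by linarith
  have z5 : bil v r5 * bil v r5 ≤ 0 := by linarith
  have z6 : bil v r6 * bil v r6 ≤ 0 := by linarith
  have z7 : bil v r7 * bil v r7 ≤ 0 := by linarith
  have z8 : bil v r8 * bil v r8 ≤ 0 := by linarith
  have z9 : bil v r9 * bil v r9 ≤ 0 := by linarith
  have z10 : bil v r10 * bil v r10 ≤ 0 := by linarith
  exact ⟨mul_self_eq_zero.mp (le_antisymm z2 p2_2), mul_self_eq_zero.mp (le_antisymm z3 p3_3), mul_self_eq_zero.mp (le_antisymm z4 p4_4), mul_self_eq_zero.mp (le_antisymm z5 p5_5), mul_self_eq_zero.mp (le_antisymm z6 p6_6), mul_self_eq_zero.mp (le_antisymm z7 p7_7), mul_self_eq_zero.mp (le_antisymm z8 p8_8), mul_self_eq_zero.mp (le_antisymm z9 p9_9), mul_self_eq_zero.mp (le_antisymm z10 p10_10)⟩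
lemma chamber_decomp (v : Vec) (h2 : bil v r2 = 0) (h3 : bil v r3 = 0) (h4 : bil v r4 = 0)
    (h5 : bil v r5 = 0) (h6 : bil v r6 = 0) (h7 : bil v r7 = 0) (h8 : bil v r8 = 0)
    (h9 : bil v r9 = 0) (h10 : bil v r10 = 0) : v = bil v r1 • ρ := by
  simp only [bil, r1, r2, r3, r4, r5, r6, r7, r8, r9, r10,
    vec10_0, vec10_1, vec10_2, vec10_3, vec10_4, vec10_5, vec10_6, vec10_7, vec10_8, vec10_9]
    at h2 h3 h4 h5 h6 h7 h8 h9 h10 ⊢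
  have e0 : v 0 = (((v 8 * 1 + v 9 * (-1) -
      (v 0 * 0 + v 1 * 0 + v 2 * 0 + v 3 * 0 + v 4 * 0 + v 5 * 0 + v 6 * 0 + v 7 * 0)) : ℚ) • ρ) 0 := by
    simp only [Pi.smul_apply, smul_eq_mul, ρ, vec10_0, vec10_1, vec10_2, vec10_3, vec10_4,
      vec10_5, vec10_6, vec10_7, vec10_8, vec10_9]
    linear_combination (-1/2) * h3 + (-1) * h4 + (-3/2) * h5 + (-2) * h6 + (-5/2) * h7 + (-2) * h8 + (-3/2) * h9 + (-1) * h10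
  have e1 : v 1 = (((v 8 * 1 + v 9 * (-1) -
      (v 0 * 0 + v 1 * 0 + v 2 * 0 + v 3 * 0 + v 4 * 0 + v 5 * 0 + v 6 * 0 + v 7 * 0)) : ℚ) • ρ) 1 := by
    simp only [Pi.smul_apply, smul_eq_mul, ρ, vec10_0, vec10_1, vec10_2, vec10_3, vec10_4,
      vec10_5, vec10_6, vec10_7, vec10_8, vec10_9]
    linear_combination (-1/2) * h3 + (-1) * h4 + (-3/2) * h5 + (-2) * h6 + (-5/2) * h7 + (-2) * h8 + (-1/2) * h9 + (-1) * h10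
  have e2 : v 2 = (((v 8 * 1 + v 9 * (-1) -
      (v 0 * 0 + v 1 * 0 + v 2 * 0 + v 3 * 0 + v 4 * 0 + v 5 * 0 + v 6 * 0 + v 7 * 0)) : ℚ) • ρ) 2 := by
    simp only [Pi.smul_apply, smul_eq_mul, ρ, vec10_0, vec10_1, vec10_2, vec10_3, vec10_4,
      vec10_5, vec10_6, vec10_7, vec10_8, vec10_9]
    linear_combination (-1/2) * h3 + (-1) * h4 + (-3/2) * h5 + (-2) * h6 + (-5/2) * h7 + (-1) * h8 + (-1/2) * h9 + (-1) * h10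
  have e3 : v 3 = (((v 8 * 1 + v 9 * (-1) -
      (v 0 * 0 + v 1 * 0 + v 2 * 0 + v 3 * 0 + v 4 * 0 + v 5 * 0 + v 6 * 0 + v 7 * 0)) : ℚ) • ρ) 3 := by
    simp only [Pi.smul_apply, smul_eq_mul, ρ, vec10_0, vec10_1, vec10_2, vec10_3, vec10_4,
      vec10_5, vec10_6, vec10_7, vec10_8, vec10_9]
    linear_combination (-1/2) * h3 + (-1) * h4 + (-3/2) * h5 + (-2) * h6 + (-3/2) * h7 + (-1) * h8 + (-1/2) * h9 + (-1) * h10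
  have e4 : v 4 = (((v 8 * 1 + v 9 * (-1) -
      (v 0 * 0 + v 1 * 0 + v 2 * 0 + v 3 * 0 + v 4 * 0 + v 5 * 0 + v 6 * 0 + v 7 * 0)) : ℚ) • ρ) 4 := by
    simp only [Pi.smul_apply, smul_eq_mul, ρ, vec10_0, vec10_1, vec10_2, vec10_3, vec10_4,
      vec10_5, vec10_6, vec10_7, vec10_8, vec10_9]
    linear_combination (-1/2) * h3 + (-1) * h4 + (-3/2) * h5 + (-1) * h6 + (-3/2) * h7 + (-1) * h8 + (-1/2) * h9 + (-1) * h10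
  have e5 : v 5 = (((v 8 * 1 + v 9 * (-1) -
      (v 0 * 0 + v 1 * 0 + v 2 * 0 + v 3 * 0 + v 4 * 0 + v 5 * 0 + v 6 * 0 + v 7 * 0)) : ℚ) • ρ) 5 := by
    simp only [Pi.smul_apply, smul_eq_mul, ρ, vec10_0, vec10_1, vec10_2, vec10_3, vec10_4,
      vec10_5, vec10_6, vec10_7, vec10_8, vec10_9]
    linear_combination (-1/2) * h3 + (-1) * h4 + (-1/2) * h5 + (-1) * h6 + (-3/2) * h7 + (-1) * h8 + (-1/2) * h9 + (-1) * h10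
  have e6 : v 6 = (((v 8 * 1 + v 9 * (-1) -
      (v 0 * 0 + v 1 * 0 + v 2 * 0 + v 3 * 0 + v 4 * 0 + v 5 * 0 + v 6 * 0 + v 7 * 0)) : ℚ) • ρ) 6 := by
    simp only [Pi.smul_apply, smul_eq_mul, ρ, vec10_0, vec10_1, vec10_2, vec10_3, vec10_4,
      vec10_5, vec10_6, vec10_7, vec10_8, vec10_9]
    linear_combination (-1/2) * h3 + (-1/2) * h5 + (-1) * h6 + (-3/2) * h7 + (-1) * h8 + (-1/2) * h9 + (-1) * h10
  have e7 : v 7 = (((v 8 * 1 + v 9 * (-1) -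
      (v 0 * 0 + v 1 * 0 + v 2 * 0 + v 3 * 0 + v 4 * 0 + v 5 * 0 + v 6 * 0 + v 7 * 0)) : ℚ) • ρ) 7 := by
    simp only [Pi.smul_apply, smul_eq_mul, ρ, vec10_0, vec10_1, vec10_2, vec10_3, vec10_4,
      vec10_5, vec10_6, vec10_7, vec10_8, vec10_9]
    linear_combination (1/2) * h3 + (-1/2) * h5 + (-1) * h6 + (-3/2) * h7 + (-1) * h8 + (-1/2) * h9 + (-1) * h10
  have e8 : v 8 = (((v 8 * 1 + v 9 * (-1) -
      (v 0 * 0 + v 1 * 0 + v 2 * 0 + v 3 * 0 + v 4 * 0 + v 5 * 0 + v 6 * 0 + v 7 * 0)) : ℚ) • ρ) 8 := by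
    simp only [Pi.smul_apply, smul_eq_mul, ρ, vec10_0, vec10_1, vec10_2, vec10_3, vec10_4,
      vec10_5, vec10_6, vec10_7, vec10_8, vec10_9]
    linear_combination h2 + 2 * h3 + 3 * h4 + 4 * h5 + 5 * h6 + 6 * h7 + 4 * h8 + 2 * h9 + 3 * h10
  have e9 : v 9 = (((v 8 * 1 + v 9 * (-1) -
      (v 0 * 0 + v 1 * 0 + v 2 * 0 + v 3 * 0 + v 4 * 0 + v 5 * 0 + v 6 * 0 + v 7 * 0)) : ℚ) • ρ) 9 := by
    simp only [Pi.smul_apply, smul_eq_mul, ρ, vec10_0, vec10_1, vec10_2, vec10_3, vec10_4,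
      vec10_5, vec10_6, vec10_7, vec10_8, vec10_9]
    linear_combination h2 + 2 * h3 + 3 * h4 + 4 * h5 + 5 * h6 + 6 * h7 + 4 * h8 + 2 * h9 + 3 * h10
  funext k
  fin_cases k
  exacts [e0, e1, e2, e3, e4, e5, e6, e7, e8, e9]

lemma reflG_apply (r : Vec) (hr : bil r r = -2) (x : Vec) :
    reflG r hr x = x + bil x r • r := rfl

lemma mulG_apply (f g : Vec ≃ₗ[ℚ] Vec) (x : Vec) : (f * g) x = f (g x) := rfl

lemma oneG_apply (x : Vec) : (1 : Vec ≃ₗ[ℚ] Vec) x = x := rfl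

lemma refl_norm (r x : Vec) (hr : bil r r = -2) :
    bil (x + bil x r • r) (x + bil x r • r) = bil x x := by
  simp only [bil_add_left, bil_add_right, bil_smul_left, bil_smul_right, hr, bil_comm r x]
  ring

lemma refl_mem {x r : Vec} (hx : mem x) (hr : mem r) : mem (x + bil x r • r) := by
  obtain ⟨n, hn⟩ := bil_int hx hr
  rw [hn]
  exact mem_add hx (mem_zsmul n hr)

/-- the subgroup generated by the ten reflections -/
def GW : Subgroup (Vec ≃ₗ[ℚ] Vec) :=
  Subgroup.closure
    {reflG r1 r1_norm, reflG r2 r2_norm, reflG r3 r3_norm, reflG r4 r4_norm,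
     reflG r5 r5_norm, reflG r6 r6_norm, reflG r7 r7_norm, reflG r8 r8_norm,
     reflG r9 r9_norm, reflG r10 r10_norm}

lemma gen1_mem : reflG r1 r1_norm ∈ GW :=
  Subgroup.subset_closure (by simp [Set.mem_insert_iff, Set.mem_singleton_iff])

lemma gen2_mem : reflG r2 r2_norm ∈ GW :=
  Subgroup.subset_closure (by simp [Set.mem_insert_iff, Set.mem_singleton_iff])

lemma gen3_mem : reflG r3 r3_norm ∈ GW :=
  Subgroup.subset_closure (by simp [Set.mem_insert_iff, Set.mem_singleton_iff])

lemma gen4_mem : reflG r4 r4_norm ∈ GW :=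
  Subgroup.subset_closure (by simp [Set.mem_insert_iff, Set.mem_singleton_iff])

lemma gen5_mem : reflG r5 r5_norm ∈ GW :=
  Subgroup.subset_closure (by simp [Set.mem_insert_iff, Set.mem_singleton_iff])

lemma gen6_mem : reflG r6 r6_norm ∈ GW :=
  Subgroup.subset_closure (by simp [Set.mem_insert_iff, Set.mem_singleton_iff])

lemma gen7_mem : reflG r7 r7_norm ∈ GW :=
  Subgroup.subset_closure (by simp [Set.mem_insert_iff, Set.mem_singleton_iff])

lemma gen8_mem : reflG r8 r8_norm ∈ GW :=
  Subgroup.subset_closure (by simp [Set.mem_insert_iff, Set.mem_singleton_iff])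

lemma gen9_mem : reflG r9 r9_norm ∈ GW :=
  Subgroup.subset_closure (by simp [Set.mem_insert_iff, Set.mem_singleton_iff])

lemma gen10_mem : reflG r10 r10_norm ∈ GW :=
  Subgroup.subset_closure (by simp [Set.mem_insert_iff, Set.mem_singleton_iff])

lemma r1_wv : bil r1 wv = 1 := by norm_num [bil, r1, wv]
lemma r2_wv : bil r2 wv = 1 := by norm_num [bil, r2, wv]
lemma r3_wv : bil r3 wv = 1 := by norm_num [bil, r3, wv]
lemma r4_wv : bil r4 wv = 1 := by norm_num [bil, r4, wv]
lemma r5_wv : bil r5 wv = 1 := by norm_num [bil, r5, wv]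
lemma r6_wv : bil r6 wv = 1 := by norm_num [bil, r6, wv]
lemma r7_wv : bil r7 wv = 1 := by norm_num [bil, r7, wv]
lemma r8_wv : bil r8 wv = 1 := by norm_num [bil, r8, wv]
lemma r9_wv : bil r9 wv = 1 := by norm_num [bil, r9, wv]
lemma r10_wv : bil r10 wv = 1 := by norm_num [bil, r10, wv]

lemma chamber {v : Vec} (hv : IsNull v)
    (g1 : 0 ≤ bil v r1) (g2 : 0 ≤ bil v r2) (g3 : 0 ≤ bil v r3) (g4 : 0 ≤ bil v r4)
    (g5 : 0 ≤ bil v r5) (g6 : 0 ≤ bil v r6) (g7 : 0 ≤ bil v r7) (g8 : 0 ≤ bil v r8)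
    (g9 : 0 ≤ bil v r9) (g10 : 0 ≤ bil v r10) : v = ρ := by
  obtain ⟨hm, hn, hf, hp⟩ := hv
  obtain ⟨z2, z3, z4, z5, z6, z7, z8, z9, z10⟩ := gram_zero v hn g1 g2 g3 g4 g5 g6 g7 g8 g9 g10
  have hd := chamber_decomp v z2 z3 z4 z5 z6 z7 z8 z9 z10
  obtain ⟨c, hc⟩ := bil_int hm mem_r1
  have hfut : bil v eU = bil v r1 := by
    conv_lhs => rw [hd]
    rw [bil_smul_left]
    norm_num [bil, ρ, eU]
  have hcpos : (0:ℚ) < c := by rw [← hc, ← hfut]; exact hf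
  have hc1 : c = 1 ∨ c = -1 := hp c ρ mem_rho (by rw [hd, hc])
  rcases hc1 with h | h
  · rw [hd, hc, h]
    push_cast
    rw [one_smul]
  · exfalso; rw [h] at hcpos; norm_num at hcpos

set_option maxHeartbeats 1000000 in
lemma descent : ∀ n : ℕ, ∀ v : Vec, IsNull v → bil v wv ≤ (n : ℚ) → ∃ g ∈ GW, g v = ρ := by
  intro n
  induction n using Nat.strong_induction_on with
  | _ n IH =>
    intro v hv hle
    obtain ⟨hm, hnull, hfut, hprim⟩ := hv
    have hposw : 0 < bil v wv := wpos hnull hfut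
    have hn1 : 1 ≤ n := by
      by_contra hcon
      push_neg at hcon
      interval_cases n
      · simp only [Nat.cast_zero] at hle; linarith
    have step : ∀ (r : Vec) (hr : bil r r = -2), mem r → bil r wv = 1 →
        reflG r hr ∈ GW → bil v r < 0 → ∃ g ∈ GW, g v = ρ := by
      intro r hr hmr hrw hgen hneg
      obtain ⟨c, hc⟩ := bil_int hm hmr
      have hcneg : c ≤ -1 := by
        have : (c:ℚ) < 0 := by rw [← hc]; exact hneg
        have : c < 0 := by exact_mod_cast this
        omega
      have hv'eq : reflG r hr v = v + bil v r • r := rfl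
      have hnull' : bil (reflG r hr v) (reflG r hr v) = 0 := by
        rw [hv'eq, refl_norm r v hr]; exact hnull
      have hmem' : mem (reflG r hr v) := by rw [hv'eq]; exact refl_mem hm hmr
      have hfut' : 0 < bil (reflG r hr v) eU := by
        apply cone hnull hnull' hfut
        have hb : bil v (reflG r hr v) = bil v r * bil v r := by
          rw [hv'eq, bil_add_right, bil_smul_right, hnull]; ring
        rw [hb]
        exact mul_pos_of_neg_of_neg hneg hneg
      have hprim' : ∀ (k : ℤ) (w : Vec), mem w → reflG r hr v = (k:ℚ) • w →
          k = 1 ∨ k = -1 := by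
        intro k w hw heq
        apply hprim k (reflG r hr w) (by rw [reflG_apply]; exact refl_mem hw hmr)
        have hvv : v = reflG r hr (reflG r hr v) := (reflMap_invol r hr v).symm
        rw [hvv, heq, map_smul]
      have hwv' : bil (reflG r hr v) wv = bil v wv + (c:ℚ) := by
        rw [hv'eq, bil_add_left, bil_smul_left, hrw, hc]; ring
      have hle' : bil (reflG r hr v) wv ≤ ((n - 1 : ℕ) : ℚ) := by
        rw [hwv']
        have : ((n - 1 : ℕ) : ℚ) = (n : ℚ) - 1 := by
          push_cast [Nat.cast_sub hn1]; ring
        rw [this]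
        have : (c : ℚ) ≤ -1 := by exact_mod_cast hcneg
        linarith
      obtain ⟨g, hg, hgv⟩ := IH (n - 1) (by omega) (reflG r hr v)
        ⟨hmem', hnull', hfut', hprim'⟩ hle'
      exact ⟨g * reflG r hr, mul_mem hg hgen, by rw [mulG_apply]; exact hgv⟩
    by_cases h1 : bil v r1 < 0
    · exact step r1 r1_norm mem_r1 r1_wv gen1_mem h1
    by_cases h2 : bil v r2 < 0
    · exact step r2 r2_norm mem_r2 r2_wv gen2_mem h2
    by_cases h3 : bil v r3 < 0
    · exact step r3 r3_norm mem_r3 r3_wv gen3_mem h3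
    by_cases h4 : bil v r4 < 0
    · exact step r4 r4_norm mem_r4 r4_wv gen4_mem h4
    by_cases h5 : bil v r5 < 0
    · exact step r5 r5_norm mem_r5 r5_wv gen5_mem h5
    by_cases h6 : bil v r6 < 0
    · exact step r6 r6_norm mem_r6 r6_wv gen6_mem h6
    by_cases h7 : bil v r7 < 0
    · exact step r7 r7_norm mem_r7 r7_wv gen7_mem h7
    by_cases h8 : bil v r8 < 0
    · exact step r8 r8_norm mem_r8 r8_wv gen8_mem h8
    by_cases h9 : bil v r9 < 0
    · exact step r9 r9_norm mem_r9 r9_wv gen9_mem h9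
    by_cases h10 : bil v r10 < 0
    · exact step r10 r10_norm mem_r10 r10_wv gen10_mem h10
    push_neg at h1 h2 h3 h4 h5 h6 h7 h8 h9 h10
    exact ⟨1, one_mem _,
      by rw [oneG_apply]; exact chamber ⟨hm, hnull, hfut, hprim⟩ h1 h2 h3 h4 h5 h6 h7 h8 h9 h10⟩

lemma to_rho {v : Vec} (hv : IsNull v) : ∃ g ∈ GW, g v = ρ := by
  obtain ⟨m, hm⟩ := bil_int hv.1 mem_wv
  have hpos : 0 < bil v wv := wpos hv.2.1 hv.2.2.1
  have hmpos : 0 < m := by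
    have : (0:ℚ) < m := by rw [← hm]; exact hpos
    exact_mod_cast this
  refine descent m.toNat v hv ?_
  rw [hm]
  exact_mod_cast Int.self_le_toNat m

/-- The group `W₂₃₇` generated by the reflections in the ten roots
`r₁,…,r₁₀` acts transitively on the set of null vectors of `Λ`
(future-directed primitive lattice vectors of norm `0`). -/
theorem W237_transitive_on_null_vectors :
    ∀ u v : Vec, IsNull u → IsNull v →
      ∃ w ∈ Subgroup.closure
        {reflG r1 r1_norm, reflG r2 r2_norm, reflG r3 r3_norm, reflG r4 r4_norm,
         reflG r5 r5_norm, reflG r6 r6_norm, reflG r7 r7_norm, reflG r8 r8_norm,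
         reflG r9 r9_norm, reflG r10 r10_norm},
        w u = v := by
  intro u v hu hv
  obtain ⟨gu, hgu, hguu⟩ := to_rho hu
  obtain ⟨gv, hgv, hgvv⟩ := to_rho hv
  refine ⟨gv⁻¹ * gu, ?_, ?_⟩
  · exact (mul_mem (inv_mem hgv) hgu : _ ∈ GW)
  · rw [mulG_apply, hguu, ← hgvv]
    exact gv.symm_apply_apply v
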